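/- Let q > 1. Then the limit lim_{N→∞} ‖D_N‖_{L^q} / N^{1−1/q} exists, is finite, and equals γ(q) = ((1/π) ∫_{−∞}^{+∞} |sin(x)/x|^q dx)^{1/q}. -/

import Mathlib

open MeasureTheory Real Filter Set Topology

/-- The Dirichlet kernel `D_N(t) = sin(Nt/2)/sin(t/2)`. -/
noncomputable def dirichlet (N : ℕ) (t : ℝ) : ℝ :=
  Real.sin (N * t / 2) / Real.sin (t / 2)

/-- The (normalized) `L^q` norm over `[-π,π]`, for a finite exponent `q`. -/
noncomputable def LqNorm (q : ℝ) (f : ℝ → ℝ) : ℝ :=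
  ((2 * Real.pi)⁻¹ * ∫ t in (-Real.pi)..Real.pi, |f t| ^ q) ^ (1 / q)

lemma sinc_measurable (q : ℝ) (hq : 0 ≤ q) :
    Measurable (fun x : ℝ => |Real.sin x / x| ^ q) :=
  (Real.continuous_rpow_const hq).measurable.comp
    (Real.measurable_sin.div measurable_id).abs

lemma sinc_abs_le_one (x : ℝ) : |Real.sin x / x| ≤ 1 := by
  rcases eq_or_ne x 0 with h | h
  · simp [h]
  · rw [abs_div]
    exact div_le_one_of_le₀ Real.abs_sin_le_abs (abs_nonneg _)

lemma integrable_sinc_rpow (q : ℝ) (hq : 1 < q) :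
    Integrable (fun x : ℝ => |Real.sin x / x| ^ q) := by
  have hq0 : (0:ℝ) < q := by linarith
  set g : ℝ → ℝ := fun x => |Real.sin x / x| ^ q with hg
  have hmeas : Measurable g := sinc_measurable q hq0.le
  have hnonneg : ∀ x, 0 ≤ g x := fun x => Real.rpow_nonneg (abs_nonneg _) q
  have hIoi : IntegrableOn g (Ioi 1) := by
    refine Integrable.mono (integrableOn_Ioi_rpow_of_lt (by linarith : -q < -1) one_pos)
      hmeas.aestronglyMeasurable.restrict ?_
    refine (ae_restrict_iff' measurableSet_Ioi).2 (ae_of_all _ fun x hx => ?_)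
    have hx1 : (1:ℝ) < x := hx
    have hx0 : (0:ℝ) < x := by linarith
    have h1 : |Real.sin x / x| ≤ x⁻¹ := by
      rw [abs_div, abs_of_pos hx0, ← one_div]
      gcongr
      exact Real.abs_sin_le_one x
    have h2 : g x ≤ x ^ (-q) := by
      calc g x ≤ (x⁻¹) ^ q := Real.rpow_le_rpow (abs_nonneg _) h1 hq0.le
      _ = x ^ (-q) := by rw [Real.inv_rpow hx0.le, Real.rpow_neg hx0.le]
    rw [Real.norm_eq_abs, Real.norm_eq_abs, abs_of_nonneg (hnonneg x),
      abs_of_nonneg (Real.rpow_nonneg hx0.le _)]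
    exact h2
  have hIcc : IntegrableOn g (Icc (-1) 1) := by
    refine Measure.integrableOn_of_bounded (M := 1) (by simp) hmeas.aestronglyMeasurable ?_
    refine ae_of_all _ fun x => ?_
    rw [Real.norm_eq_abs, abs_of_nonneg (hnonneg x)]
    exact Real.rpow_le_one (abs_nonneg _) (sinc_abs_le_one x) hq0.le
  have hIio : IntegrableOn g (Iio (-1)) := by
    have heven : ∀ x : ℝ, g (-x) = g x := by
      intro x; simp only [hg, Real.sin_neg, neg_div_neg_eq]
    have hpre : (fun x : ℝ => -x) ⁻¹' (Ioi 1) = Iio (-1) := by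
      ext x; simp only [mem_preimage, mem_Ioi, mem_Iio]; constructor <;> intro <;> linarith
    have := (MeasurePreserving.integrableOn_comp_preimage
      (Measure.measurePreserving_neg (volume : Measure ℝ))
      (Homeomorph.neg ℝ).measurableEmbedding (f := g) (s := Ioi 1)).2 hIoi
    have heq : (g ∘ fun x : ℝ => -x) = g := by funext x; exact heven x
    rw [hpre, heq] at this
    exact this
  have huniv : Iio (-1) ∪ (Icc (-1) 1 ∪ Ioi 1) = (univ : Set ℝ) := by
    ext x
    simp only [mem_union, mem_Iio, mem_Icc, mem_Ioi, mem_univ, iff_true]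
    by_cases h1 : x < -1
    · exact Or.inl h1
    · by_cases h2 : x ≤ 1
      · exact Or.inr (Or.inl ⟨by linarith, h2⟩)
      · exact Or.inr (Or.inr (by linarith))
  rw [← integrableOn_univ, ← huniv]
  exact (hIio.union (hIcc.union hIoi))

/-- For `q > 1`, `‖D_N‖_{L^q} / N^{1-1/q}` converges, as `N → ∞`, to the finite limit
`γ(q) = ((1/π) ∫_{-∞}^{∞} |sin x / x|^q dx)^{1/q}`. -/
theorem stmt5 (q : ℝ) (hq : 1 < q) :
    Filter.Tendsto
      (fun N : ℕ => LqNorm q (dirichlet N) / (N : ℝ) ^ (1 - 1 / q))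
      Filter.atTop
      (nhds (((Real.pi)⁻¹ * ∫ x : ℝ, |Real.sin x / x| ^ q) ^ (1 / q))) := by
  have hq0 : (0:ℝ) < q := by linarith
  have hπ : (0:ℝ) < π := Real.pi_pos
  set g : ℝ → ℝ := fun x => |Real.sin x / x| ^ q with hgdef
  set F : ℕ → ℝ → ℝ := fun N =>
    Set.indicator (Set.Ioc (-((N:ℝ) * π / 2)) ((N:ℝ) * π / 2))
      (fun u => |Real.sin u / ((N:ℝ) * Real.sin (u / (N:ℝ)))| ^ q) with hFdef
  have hg_nonneg : ∀ x, 0 ≤ g x := fun x => Real.rpow_nonneg (abs_nonneg _) q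
  have hF_nonneg : ∀ N u, 0 ≤ F N u := by
    intro N u
    exact Set.indicator_nonneg (fun u _ => Real.rpow_nonneg (abs_nonneg _) q) u
  have hF_meas : ∀ N, AEStronglyMeasurable (F N) volume := by
    intro N
    refine (Measurable.indicator ?_ measurableSet_Ioc).aestronglyMeasurable
    exact (Real.continuous_rpow_const hq0.le).measurable.comp
      (Real.measurable_sin.div
        (measurable_const.mul (Real.measurable_sin.comp (measurable_id.div_const _)))).abs
  -- the key pointwise bound
  have hbound : ∀ N : ℕ, ∀ u : ℝ, F N u ≤ (π/2) ^ q * g u := by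
    intro N u
    by_cases hu : u ∈ Set.Ioc (-((N:ℝ) * π / 2)) ((N:ℝ) * π / 2)
    · rw [hFdef]
      simp only []
      rw [Set.indicator_of_mem hu]
      have hN0 : 0 < (N:ℝ) := by
        by_contra h
        push_neg at h
        have h0 : (N:ℝ) = 0 := le_antisymm h (Nat.cast_nonneg N)
        rw [h0] at hu
        simp at hu
      by_cases hu0 : u = 0
      · subst hu0
        simp [Real.zero_rpow hq0.ne']
        positivity
      · have habs : |u| ≤ (N:ℝ) * π / 2 := by
          rw [abs_le]
          exact ⟨by linarith [hu.1], hu.2⟩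
        have habs2 : |u / (N:ℝ)| ≤ π / 2 := by
          rw [abs_div, abs_of_pos hN0, div_le_iff₀ hN0]
          calc |u| ≤ (N:ℝ) * π / 2 := habs
          _ = π / 2 * (N:ℝ) := by ring
        have hkey : 2 / π * |u| ≤ |(N:ℝ) * Real.sin (u / (N:ℝ))| := by
          have := Real.mul_abs_le_abs_sin habs2
          calc 2 / π * |u| = (N:ℝ) * (2 / π * |u / (N:ℝ)|) := by
                rw [abs_div, abs_of_pos hN0]; field_simp
          _ ≤ (N:ℝ) * |Real.sin (u / (N:ℝ))| := by
                exact mul_le_mul_of_nonneg_left this hN0.le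
          _ = |(N:ℝ) * Real.sin (u / (N:ℝ))| := by
                rw [abs_mul, abs_of_pos hN0]
        have hupos : (0:ℝ) < 2 / π * |u| := by positivity
        have hest : |Real.sin u / ((N:ℝ) * Real.sin (u / (N:ℝ)))| ≤ π / 2 * |Real.sin u / u| := by
          rw [abs_div]
          calc |Real.sin u| / |(N:ℝ) * Real.sin (u / (N:ℝ))|
              ≤ |Real.sin u| / (2 / π * |u|) := by gcongr
          _ = π / 2 * |Real.sin u / u| := by
              rw [abs_div]
              have hu' : |u| ≠ 0 := abs_ne_zero.mpr hu0
              field_simp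
        calc |Real.sin u / ((N:ℝ) * Real.sin (u / (N:ℝ)))| ^ q
            ≤ (π / 2 * |Real.sin u / u|) ^ q :=
              Real.rpow_le_rpow (abs_nonneg _) hest hq0.le
        _ = (π/2) ^ q * g u := by
              rw [Real.mul_rpow (by positivity) (abs_nonneg _)]
    · rw [hFdef]
      simp only []
      rw [Set.indicator_of_notMem hu]
      positivity
  -- pointwise convergence
  have hlim : ∀ u : ℝ, Tendsto (fun N : ℕ => F N u) atTop (𝓝 (g u)) := by
    intro u
    by_cases hu0 : u = 0
    · subst hu0
      have hF0 : ∀ N, F N 0 = 0 := by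
        intro N
        rw [hFdef]
        simp [Set.indicator_apply, Real.zero_rpow hq0.ne']
      have hg0 : g 0 = 0 := by
        simp [hgdef, Real.zero_rpow hq0.ne']
      rw [hg0]
      simp only [hF0]
      exact (tendsto_const_nhds : Tendsto (fun _ : ℕ => (0:ℝ)) atTop (𝓝 0))
    · have hslope : Tendsto (fun x : ℝ => Real.sin x / x) (𝓝[≠] (0:ℝ)) (𝓝 1) := by
        have h := hasDerivAt_iff_tendsto_slope.mp (Real.hasDerivAt_sin 0)
        simp only [Real.cos_zero] at h
        refine h.congr (fun x => ?_)
        simp [slope_fun_def, Real.sin_zero, div_eq_inv_mul]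
      have h2 : Tendsto (fun N : ℕ => u / (N:ℝ)) atTop (𝓝[≠] (0:ℝ)) := by
        rw [tendsto_nhdsWithin_iff]
        constructor
        · exact tendsto_const_div_atTop_nhds_zero_nat u
        · filter_upwards [eventually_ge_atTop 1] with N hN
          have hN0 : ((N:ℝ)) ≠ 0 := by positivity
          simp only [mem_compl_iff, mem_singleton_iff]
          exact div_ne_zero hu0 hN0
      have h3 := hslope.comp h2
      have h4 : Tendsto (fun N : ℕ => u * (Real.sin (u / (N:ℝ)) / (u / (N:ℝ)))) atTop (𝓝 u) := by
        have := h3.const_mul u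
        simpa using this
      have h1 : Tendsto (fun N : ℕ => (N:ℝ) * Real.sin (u / (N:ℝ))) atTop (𝓝 u) := by
        refine h4.congr' ?_
        filter_upwards [eventually_ge_atTop 1] with N hN
        have hN0 : ((N:ℝ)) ≠ 0 := by positivity
        field_simp
      have hc : ContinuousAt (fun x : ℝ => |Real.sin u / x| ^ q) u :=
        ((continuousAt_const.div continuousAt_id hu0).abs).rpow_const (Or.inr hq0.le)
      have h5 := (hc.tendsto.comp h1 :
        Tendsto (fun N : ℕ => |Real.sin u / ((N:ℝ) * Real.sin (u / (N:ℝ)))| ^ q) atTop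
          (𝓝 (|Real.sin u / u| ^ q)))
      refine h5.congr' ?_
      have hev : ∀ᶠ N : ℕ in atTop, |u| < (N:ℝ) * π / 2 := by
        have ht : Tendsto (fun N : ℕ => (N:ℝ) * π / 2) atTop atTop := by
          apply Filter.Tendsto.atTop_div_const (by norm_num : (0:ℝ) < 2)
          exact Filter.Tendsto.atTop_mul_const hπ tendsto_natCast_atTop_atTop
        exact ht.eventually_gt_atTop |u|
      filter_upwards [hev] with N hN
      have hmem : u ∈ Set.Ioc (-((N:ℝ) * π / 2)) ((N:ℝ) * π / 2) := by
        rw [abs_lt] at hN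
        exact ⟨hN.1, hN.2.le⟩
      rw [hFdef]
      simp only []
      rw [Set.indicator_of_mem hmem]
      rfl
  -- DCT
  have hint : Tendsto (fun N : ℕ => ∫ u, F N u) atTop (𝓝 (∫ u, g u)) := by
    refine tendsto_integral_of_dominated_convergence (fun u => (π/2) ^ q * g u)
      hF_meas ((integrable_sinc_rpow q hq).const_mul _) ?_ (ae_of_all _ hlim)
    intro N
    refine ae_of_all _ fun u => ?_
    rw [Real.norm_eq_abs, abs_of_nonneg (hF_nonneg N u)]
    exact hbound N u
  -- continuity of the outer map
  have hcont : ContinuousAt (fun x : ℝ => (π⁻¹ * x) ^ (1/q)) (∫ u, g u) :=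
    ((continuousAt_const.mul continuousAt_id)).rpow_const (Or.inr (by positivity))
  have hmain : Tendsto (fun N : ℕ => (π⁻¹ * ∫ u, F N u) ^ (1/q)) atTop
      (𝓝 ((π⁻¹ * ∫ u, g u) ^ (1/q))) := hcont.tendsto.comp hint
  refine hmain.congr' ?_
  filter_upwards [eventually_ge_atTop 1] with N hN
  have hn : (0:ℝ) < (N:ℝ) := by exact_mod_cast Nat.pos_of_ne_zero (by omega)
  have hn' : ((N:ℝ)) ≠ 0 := hn.ne'
  -- substitution
  have hpt : ∀ u : ℝ, |dirichlet N (2 / (N:ℝ) * u)| ^ q = |Real.sin u / Real.sin (u / (N:ℝ))| ^ q := by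
    intro u
    have e1 : (N:ℝ) * (2 / (N:ℝ) * u) / 2 = u := by field_simp
    have e2 : (2 / (N:ℝ) * u) / 2 = u / (N:ℝ) := by ring
    rw [dirichlet, e1, e2]
  have hsub : (∫ t in (-π)..π, |dirichlet N t| ^ q)
      = (2 / (N:ℝ)) * ∫ u in (-((N:ℝ) * π / 2))..((N:ℝ) * π / 2),
          |Real.sin u / Real.sin (u / (N:ℝ))| ^ q := by
    have h := intervalIntegral.smul_integral_comp_mul_left
      (a := -((N:ℝ) * π / 2)) (b := (N:ℝ) * π / 2)
      (fun t => |dirichlet N t| ^ q) (2 / (N:ℝ))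
    rw [show (2 / (N:ℝ)) * -((N:ℝ) * π / 2) = -π by field_simp,
        show (2 / (N:ℝ)) * ((N:ℝ) * π / 2) = π by field_simp] at h
    rw [← h, smul_eq_mul]
    congr 1
    exact intervalIntegral.integral_congr (fun u _ => hpt u)
  have hIoc : (∫ u in (-((N:ℝ) * π / 2))..((N:ℝ) * π / 2),
        |Real.sin u / Real.sin (u / (N:ℝ))| ^ q)
      = ∫ u, Set.indicator (Set.Ioc (-((N:ℝ) * π / 2)) ((N:ℝ) * π / 2))
          (fun u => |Real.sin u / Real.sin (u / (N:ℝ))| ^ q) u := by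
    rw [intervalIntegral.integral_of_le (by nlinarith : -((N:ℝ) * π / 2) ≤ (N:ℝ) * π / 2),
      ← MeasureTheory.integral_indicator measurableSet_Ioc]
  have hind : ∀ u : ℝ, Set.indicator (Set.Ioc (-((N:ℝ) * π / 2)) ((N:ℝ) * π / 2))
      (fun u => |Real.sin u / Real.sin (u / (N:ℝ))| ^ q) u = (N:ℝ) ^ q * F N u := by
    intro u
    rw [hFdef]
    simp only [Set.indicator_apply]
    split_ifs with h
    · have e : Real.sin u / ((N:ℝ) * Real.sin (u / (N:ℝ)))
          = (Real.sin u / Real.sin (u / (N:ℝ))) / (N:ℝ) := by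
        rw [div_div, mul_comm]
      have e2 : |Real.sin u / Real.sin (u / (N:ℝ)) / (N:ℝ)|
          = |Real.sin u / Real.sin (u / (N:ℝ))| / (N:ℝ) := by
        rw [abs_div, abs_of_pos hn]
      rw [e, e2, Real.div_rpow (abs_nonneg _) hn.le,
        mul_div_cancel₀ _ (Real.rpow_pos_of_pos hn q).ne']
    · simp
  have hFint : (∫ u, Set.indicator (Set.Ioc (-((N:ℝ) * π / 2)) ((N:ℝ) * π / 2))
      (fun u => |Real.sin u / Real.sin (u / (N:ℝ))| ^ q) u) = (N:ℝ) ^ q * ∫ u, F N u := by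
    simp_rw [hind]
    exact MeasureTheory.integral_const_mul _ _
  have hI : (0:ℝ) ≤ ∫ u, F N u := integral_nonneg (hF_nonneg N)
  rw [LqNorm, hsub, hIoc, hFint]
  have e3 : (2 * π)⁻¹ * (2 / (N:ℝ) * ((N:ℝ) ^ q * ∫ u, F N u))
      = (π⁻¹ * ∫ u, F N u) * (N:ℝ) ^ (q - 1) := by
    rw [Real.rpow_sub hn, Real.rpow_one]
    field_simp
  rw [e3, Real.mul_rpow (by positivity) (Real.rpow_nonneg hn.le _),
    ← Real.rpow_mul hn.le, show (q - 1) * (1/q) = 1 - 1/q by field_simp,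
    mul_div_cancel_right₀ _ (Real.rpow_pos_of_pos hn (1 - 1/q)).ne']
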